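/- Let a, b, c be coprime integers with a^5 + b^5 = c^p for a prime p ≥ 7, such that a*b*c ≠ 0 and 2 divides a + b. Then 8 divides a + b. -/

import Mathlib

/-- If `a, b, c` are coprime integers with `a^5 + b^5 = c^p` for a prime `p ≥ 7`,
`a*b*c ≠ 0` and `2 ∣ a + b`, then `8 ∣ a + b`. -/
theorem eight_dvd_of_two_dvd_fermat55p (a b c : ℤ) (p : ℕ) (hp : p.Prime) (hp7 : 7 ≤ p)
    (hcop : Int.gcd (Int.gcd a b) c = 1) (heq : a ^ 5 + b ^ 5 = c ^ p)
    (hne : a * b * c ≠ 0) (h2 : (2 : ℤ) ∣ a + b) : (8 : ℤ) ∣ a + b := by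
  set φ : ℤ := a ^ 4 - a ^ 3 * b + a ^ 2 * b ^ 2 - a * b ^ 3 + b ^ 4 with hφ
  have hfac : a ^ 5 + b ^ 5 = (a + b) * φ := by ring
  -- 2 divides c
  have h2c : (2 : ℤ) ∣ c := by
    have h2cp : (2 : ℤ) ∣ c ^ p := by
      rw [← heq, hfac]; exact h2.mul_right φ
    exact Int.prime_two.dvd_of_dvd_pow h2cp
  -- a and b are odd
  have hab : ¬ (2 : ℤ) ∣ a := by
    intro h2a
    have h2b : (2 : ℤ) ∣ b := (dvd_add_right h2a).mp h2
    have hd : (2 : ℤ) ∣ (((Int.gcd (Int.gcd a b) c : ℕ)) : ℤ) :=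
      Int.dvd_coe_gcd (Int.dvd_coe_gcd h2a h2b) h2c
    rw [hcop] at hd
    norm_num at hd
  have hbb : ¬ (2 : ℤ) ∣ b := by
    intro h2b
    exact hab ((dvd_add_left h2b).mp h2)
  -- φ is odd
  have hφodd : ¬ (2 : ℤ) ∣ φ := by
    intro hd
    have h0 : ((φ : ℤ) : ZMod 2) = 0 := (ZMod.intCast_zmod_eq_zero_iff_dvd φ 2).mpr hd
    have ha2 : ((a : ℤ) : ZMod 2) = ((1 : ℤ) : ZMod 2) :=
      (ZMod.intCast_eq_intCast_iff _ _ _).mpr (by unfold Int.ModEq; omega)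
    have hb2 : ((b : ℤ) : ZMod 2) = ((1 : ℤ) : ZMod 2) :=
      (ZMod.intCast_eq_intCast_iff _ _ _).mpr (by unfold Int.ModEq; omega)
    rw [hφ] at h0
    push_cast at h0 ha2 hb2
    rw [ha2, hb2] at h0
    norm_num at h0
  -- 8 divides c^p = (a+b)*φ
  have h8 : (8 : ℤ) ∣ (a + b) * φ := by
    rw [← hfac, heq]
    obtain ⟨d, hd⟩ := h2c
    have hcp : c ^ p = 2 ^ p * d ^ p := by rw [hd, mul_pow]
    rw [hcp]
    have h8p : (8 : ℤ) ∣ 2 ^ p := by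
      have : (2:ℤ) ^ 3 ∣ 2 ^ p := pow_dvd_pow 2 (by omega)
      simpa using this
    exact h8p.mul_right _
  have hcopφ : IsCoprime (8 : ℤ) φ := by
    have h2φ : IsCoprime (2 : ℤ) φ := (Int.prime_two.coprime_iff_not_dvd).mpr hφodd
    have h3 := h2φ.pow_left (m := 3)
    norm_num at h3
    exact h3
  exact hcopφ.dvd_of_dvd_mul_right h8
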